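/- Let E be a finite set, ρ : E → ℝ a probability distribution with full support (ρ(a) > 0 for all a), and T a nonnegative jump rate matrix on E² with zero diagonal that is mass preserving: T[(a,b),(c,d)] > 0 implies a+b = c+d (where E ⊂ ℕ). Suppose ρ is almost-geometric: there is g : ℕ → ℝ≥0 with ρ(u)ρ(v) = g(u+v) for all u,v ∈ E. Define Z^{ρ}(b,c) = ∑_{(u,v)} T[(u,v),(b,c)] ρ(u)ρ(v)/(ρ(b)ρ(c)) − ∑_{(u,v)} T[(b,c),(u,v)]. Then Z^{ρ}(b,c) = ∑_{(u,v): u+v=b+c} (T[(u,v),(b,c)] − T[(b,c),(u,v)]); in particular Z^{ρ} does not depend on the choice of almost-geometric ρ with the same support. -/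

import Mathlib

/-- For a mass-preserving jump rate matrix and an almost-geometric full-support
distribution `ρ` on a finite set of integers, the normalized balance
`Z^ρ(b,c)` equals `∑_{u+v=b+c} (T[(u,v),(b,c)] − T[(b,c),(u,v)])`; in
particular it does not depend on the almost-geometric `ρ` chosen. -/
theorem stmt15 (E : Finset ℕ)
    (ρ : ℕ → ℝ) (hρpos : ∀ a ∈ E, 0 < ρ a) (hρsum : ∑ a ∈ E, ρ a = 1)
    (T : ℕ × ℕ → ℕ × ℕ → ℝ)
    (hTnonneg : ∀ w w', 0 ≤ T w w') (hTdiag : ∀ w, T w w = 0)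
    (hmass : ∀ a b c d : ℕ, 0 < T (a, b) (c, d) → a + b = c + d)
    (g : ℕ → ℝ) (hgeo : ∀ u ∈ E, ∀ v ∈ E, ρ u * ρ v = g (u + v))
    (b c : ℕ) (hb : b ∈ E) (hc : c ∈ E) :
    (∑ u ∈ E, ∑ v ∈ E, T (u, v) (b, c) * (ρ u * ρ v) / (ρ b * ρ c))
      - (∑ u ∈ E, ∑ v ∈ E, T (b, c) (u, v))
    = ∑ u ∈ E, ∑ v ∈ E,
        if u + v = b + c then T (u, v) (b, c) - T (b, c) (u, v) else 0 := by
  rw [← Finset.sum_sub_distrib]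
  refine Finset.sum_congr rfl fun u hu => ?_
  rw [← Finset.sum_sub_distrib]
  refine Finset.sum_congr rfl fun v hv => ?_
  by_cases h : u + v = b + c
  · have h1 : ρ u * ρ v = ρ b * ρ c := by
      rw [hgeo u hu v hv, hgeo b hb c hc, h]
    have hbc : ρ b * ρ c ≠ 0 :=
      ne_of_gt (mul_pos (hρpos b hb) (hρpos c hc))
    rw [if_pos h, h1, mul_div_assoc, div_self hbc, mul_one]
  · have h1 : T (u, v) (b, c) = 0 := by
      by_contra hne
      exact h (hmass u v b c (lt_of_le_of_ne (hTnonneg _ _) (Ne.symm hne)))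
    have h2 : T (b, c) (u, v) = 0 := by
      by_contra hne
      exact h ((hmass b c u v (lt_of_le_of_ne (hTnonneg _ _) (Ne.symm hne))).symm)
    rw [if_neg h, h1, h2]
    ring
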